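/- arXiv:2001.10150 — 4 statements merged into one kernel-verified Lean document; each statement's English description precedes it below -/
import Mathlib

section
/- Extended optional stopping theorem with polynomial growth, martingale version (Theorem C.3): Let (Ω, F, P) be a probability space with filtration (F_n)_{n∈ℕ}, let (Y_n)_{n∈ℕ} be a martingale with respect to (F_n) with E[|Y_n|] < ∞ for all n, and let T : Ω → ℕ ∪ {∞} be a stopping time with respect to (F_n). Suppose there exist ℓ ∈ ℕ with ℓ ≥ 1 and a constant C ≥ 0 such that E[T^ℓ] < ∞ and, for every n ∈ ℕ, |Y_n| ≤ C·(n+1)^ℓ holds P-almost surely. Then T < ∞ almost surely, the stopped value Y_T (the almost-everywhere defined function ω ↦ Y_{T(ω)}(ω)) is integrable, and E[Y_T] = E[Y_0]. -/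
open MeasureTheory Filter
open scoped ENNReal Topology

private lemma aux_pow_bound (a : ℝ≥0∞) (ℓ : ℕ) : (a + 1) ^ ℓ ≤ 2 ^ ℓ * (a ^ ℓ + 1) := by
  have h1 : a + 1 ≤ 2 * max a 1 := by
    rw [two_mul]
    exact add_le_add (le_max_left a 1) (le_max_right a 1)
  calc (a + 1) ^ ℓ ≤ (2 * max a 1) ^ ℓ := pow_le_pow_left₀ zero_le h1 ℓ
    _ = 2 ^ ℓ * (max a 1) ^ ℓ := mul_pow _ _ _
    _ ≤ 2 ^ ℓ * (a ^ ℓ + 1) := by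
        gcongr
        rcases le_total a 1 with h | h
        · rw [max_eq_right h, one_pow]; exact le_add_self
        · rw [max_eq_left h]; exact le_add_right le_rfl

/-- Extended optional stopping theorem with polynomial growth, martingale
version (Theorem C.3): if `(Y_n)` is a martingale, `T` is a stopping time with
`E[T^ℓ] < ∞` for some `ℓ ≥ 1`, and `|Y_n| ≤ C·(n+1)^ℓ` a.s. for all `n`, then
`T < ∞` a.s., the stopped value `Y_T` is integrable, and `E[Y_T] = E[Y_0]`. -/
theorem extended_optional_stopping_martingale
    {Ω : Type*} {mΩ : MeasurableSpace Ω} (P : Measure Ω) [IsProbabilityMeasure P]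
    (ℱ : Filtration ℕ mΩ) (Y : ℕ → Ω → ℝ)
    (hY : Martingale Y ℱ P)
    (T : Ω → ℕ∞) (hT : ∀ n : ℕ, MeasurableSet[ℱ n] {ω | T ω ≤ (n : ℕ∞)})
    (ℓ : ℕ) (hℓ : 1 ≤ ℓ) (C : ℝ) (hC : 0 ≤ C)
    (hTmom : ∫⁻ ω, (T ω : ℝ≥0∞) ^ ℓ ∂P < ⊤)
    (hgrowth : ∀ n : ℕ, ∀ᵐ ω ∂P, |Y n ω| ≤ C * (n + 1) ^ ℓ) :
    (∀ᵐ ω ∂P, T ω < ⊤) ∧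
    Integrable (fun ω => Y (T ω).toNat ω) P ∧
    ∫ ω, Y (T ω).toNat ω ∂P = ∫ ω, Y 0 ω ∂P := by
  classical
  have hTle : ∀ n : ℕ, MeasurableSet {ω | T ω ≤ (n : ℕ∞)} := fun n => ℱ.le n _ (hT n)
  -- measurability of T
  have hTmeas : Measurable T := by
    apply measurable_to_countable'
    intro y
    cases y using ENat.recTopCoe with
    | top =>
      have : T ⁻¹' {⊤} = (⋃ n : ℕ, {ω | T ω ≤ (n : ℕ∞)})ᶜ := by
        ext ω
        simp only [Set.mem_preimage, Set.mem_singleton_iff, Set.mem_compl_iff, Set.mem_iUnion,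
          Set.mem_setOf_eq, not_exists]
        constructor
        · intro h n hn
          rw [h] at hn
          exact (ENat.coe_lt_top n).not_ge hn
        · intro h
          by_contra h'
          exact h (T ω).toNat (le_of_eq (ENat.coe_toNat h').symm)
      rw [this]
      exact (MeasurableSet.iUnion fun n => hTle n).compl
    | coe n =>
      have : T ⁻¹' {(n : ℕ∞)} = {ω | T ω ≤ (n : ℕ∞)} \ ⋃ k ∈ Finset.range n,
          {ω | T ω ≤ (k : ℕ∞)} := by
        ext ω
        simp only [Set.mem_preimage, Set.mem_singleton_iff, Set.mem_diff, Set.mem_setOf_eq,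
          Set.mem_iUnion, Finset.mem_range, not_exists]
        constructor
        · intro h
          refine ⟨le_of_eq h, fun k hk hle => ?_⟩
          rw [h] at hle
          exact absurd (Nat.cast_le.mp hle) (Nat.not_le.mpr hk)
        · rintro ⟨h1, h2⟩
          obtain ⟨m, hm, hmn⟩ := ENat.le_coe_iff.mp h1
          rcases eq_or_lt_of_le hmn with h | h
          · rw [hm, h]
          · exact absurd (le_of_eq hm) (h2 m h)
      rw [this]
      exact (hTle n).diff (MeasurableSet.biUnion (Set.to_countable _) fun k _ => hTle k)
  -- T < ∞ a.s.
  have hℓ0 : 0 < ℓ := hℓ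
  have hTfin : ∀ᵐ ω ∂P, T ω < ⊤ := by
    have hmeas : Measurable fun ω => (T ω : ℝ≥0∞) ^ ℓ :=
      ((measurable_of_countable (fun x : ℕ∞ => (x : ℝ≥0∞))).comp hTmeas).pow_const ℓ
    filter_upwards [ae_lt_top hmeas hTmom.ne] with ω hω
    by_contra h
    rw [not_lt, top_le_iff] at h
    rw [h, ENat.toENNReal_top, ENNReal.top_pow hℓ0.ne'] at hω
    exact lt_irrefl _ hω
  -- the truncated stopping times
  set τ : ℕ → Ω → ℕ := fun n ω => (min (T ω) n).toNat with hτdef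
  have hτle : ∀ n ω, τ n ω ≤ n := fun n ω => ENat.toNat_le_of_le_coe (min_le_right _ _)
  have hτ_min : ∀ n k : ℕ, ∀ ω, τ n ω ≤ k ↔ min (T ω) (n : ℕ∞) ≤ (k : ℕ∞) := by
    intro n k ω
    constructor
    · intro h
      have hne : min (T ω) (n : ℕ∞) ≠ ⊤ := by
        intro hc
        exact (ENat.coe_lt_top n).ne (le_antisymm le_top (hc ▸ min_le_right _ _))
      rw [← ENat.coe_toNat hne]
      exact_mod_cast h
    · exact fun h => ENat.toNat_le_of_le_coe h
  have hτst : ∀ n, IsStoppingTime ℱ (fun ω => (τ n ω : WithTop ℕ)) := by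
    intro n k
    suffices hs : MeasurableSet[ℱ k] {ω | τ n ω ≤ k} by
      convert hs using 1
      ext ω
      simp
    have : {ω | τ n ω ≤ k} = if n ≤ k then Set.univ else {ω | T ω ≤ (k : ℕ∞)} := by
      ext ω
      rw [Set.mem_setOf_eq, hτ_min, min_le_iff]
      split_ifs with h
      · simp only [Set.mem_univ, iff_true]
        exact Or.inr (by exact_mod_cast h)
      · simp only [Set.mem_setOf_eq]
        constructor
        · rintro (h1 | h1)
          · exact h1
          · exact absurd (Nat.cast_le.mp h1) h
        · exact Or.inl
    rw [this]
    split_ifs with h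
    · exact MeasurableSet.univ
    · exact ℱ.mono le_rfl _ (hT k)
  -- strong measurability of the stopped values
  have hprog : ProgMeasurable ℱ Y := hY.stronglyAdapted.progMeasurable_of_discrete
  have hsv_meas : ∀ n, AEStronglyMeasurable (stoppedValue Y (fun ω => (τ n ω : WithTop ℕ))) P := fun n =>
    ((stronglyMeasurable_stoppedValue_of_le hprog (hτst n) (fun ω => WithTop.coe_le_coe.mpr (hτle n ω))).mono
      (ℱ.le n)).aestronglyMeasurable
  -- expectation of stopped values
  have hsv_int : ∀ n, ∫ ω, stoppedValue Y (fun ω => (τ n ω : WithTop ℕ)) ω ∂P = ∫ ω, Y 0 ω ∂P := by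
    intro n
    have h0 : IsStoppingTime ℱ (fun _ : Ω => ((0 : ℕ) : WithTop ℕ)) := isStoppingTime_const ℱ 0
    have hle : (fun _ : Ω => ((0 : ℕ) : WithTop ℕ)) ≤ (fun ω => (τ n ω : WithTop ℕ)) :=
      fun ω => WithTop.coe_le_coe.mpr (Nat.zero_le _)
    have h1 := hY.submartingale.expected_stoppedValue_mono h0 (hτst n) hle (fun ω => WithTop.coe_le_coe.mpr (hτle n ω))
    have h2 := hY.neg.submartingale.expected_stoppedValue_mono h0 (hτst n) hle (fun ω => WithTop.coe_le_coe.mpr (hτle n ω))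
    simp only [stoppedValue, Pi.neg_apply] at h2
    rw [integral_neg, integral_neg, neg_le_neg_iff] at h2
    simp only [stoppedValue] at h1 ⊢
    exact le_antisymm h2 h1
  -- the dominating function
  set g : Ω → ℝ := fun ω => C * (((T ω).toNat : ℝ) + 1) ^ ℓ with hgdef
  have hg_meas : Measurable g :=
    (measurable_of_countable (fun x : ℕ∞ => C * ((x.toNat : ℝ) + 1) ^ ℓ)).comp hTmeas
  have hg_int : Integrable g P := by
    refine ⟨hg_meas.aestronglyMeasurable, ?_⟩
    show ∫⁻ ω, (‖g ω‖₊ : ℝ≥0∞) ∂P < ⊤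
    have hbd : ∀ᵐ ω ∂P, (‖g ω‖₊ : ℝ≥0∞) ≤
        ENNReal.ofReal C * (2 ^ ℓ * ((T ω : ℝ≥0∞) ^ ℓ + 1)) := by
      filter_upwards [hTfin] with ω hω
      have hg_nonneg : 0 ≤ g ω := by positivity
      have h1 : (‖g ω‖₊ : ℝ≥0∞) = ENNReal.ofReal (g ω) :=
        (Real.enorm_eq_ofReal hg_nonneg)
      rw [h1, hgdef]
      simp only
      rw [ENNReal.ofReal_mul hC, ENNReal.ofReal_pow (by positivity)]
      gcongr
      have h2 : ENNReal.ofReal (((T ω).toNat : ℝ) + 1) = ((T ω : ℝ≥0∞) + 1) := by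
        rw [ENNReal.ofReal_add (by positivity) zero_le_one, ENNReal.ofReal_one,
          ENNReal.ofReal_natCast]
        congr 1
        rw [← ENat.coe_toNat hω.ne]
        simp
      rw [h2]
      exact aux_pow_bound _ ℓ
    calc ∫⁻ ω, (‖g ω‖₊ : ℝ≥0∞) ∂P
        ≤ ∫⁻ ω, ENNReal.ofReal C * (2 ^ ℓ * ((T ω : ℝ≥0∞) ^ ℓ + 1)) ∂P := lintegral_mono_ae hbd
      _ = ENNReal.ofReal C * 2 ^ ℓ * ((∫⁻ ω, (T ω : ℝ≥0∞) ^ ℓ ∂P) + 1) := by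
          rw [lintegral_const_mul' _ _ (by simp [ENNReal.ofReal_lt_top.ne]),
            lintegral_const_mul' _ _ (by simp),
            lintegral_add_right _ measurable_const, lintegral_const]
          simp [mul_assoc]
      _ < ⊤ := by
          apply ENNReal.mul_lt_top
          · exact ENNReal.mul_lt_top ENNReal.ofReal_lt_top
              (ENNReal.pow_lt_top (by simp))
          · exact ENNReal.add_lt_top.mpr ⟨hTmom, ENNReal.one_lt_top⟩
  -- global growth bound
  have hgrowth_all : ∀ᵐ ω ∂P, ∀ k : ℕ, |Y k ω| ≤ C * (k + 1) ^ ℓ :=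
    (ae_all_iff).mpr hgrowth
  -- a.e. bounds and convergence
  have h_bound : ∀ n, ∀ᵐ ω ∂P, ‖stoppedValue Y (fun ω => (τ n ω : WithTop ℕ)) ω‖ ≤ g ω := by
    intro n
    filter_upwards [hgrowth_all, hTfin] with ω hωg hωfin
    have hτleT : τ n ω ≤ (T ω).toNat :=
      ENat.toNat_le_toNat (min_le_left _ _) hωfin.ne
    calc ‖stoppedValue Y (fun ω => (τ n ω : WithTop ℕ)) ω‖ = |Y (τ n ω) ω| := rfl
      _ ≤ C * ((τ n ω : ℝ) + 1) ^ ℓ := hωg _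
      _ ≤ C * (((T ω).toNat : ℝ) + 1) ^ ℓ := by gcongr
  have h_lim : ∀ᵐ ω ∂P, Tendsto (fun n => stoppedValue Y (fun ω => (τ n ω : WithTop ℕ)) ω) atTop
      (𝓝 (Y (T ω).toNat ω)) := by
    filter_upwards [hTfin] with ω hω
    refine tendsto_atTop_of_eventually_const (i₀ := (T ω).toNat) fun n hn => ?_
    have : min (T ω) (n : ℕ∞) = T ω := by
      apply min_eq_left
      rw [← ENat.coe_toNat hω.ne]
      exact_mod_cast hn
    show Y (τ n ω) ω = _
    simp only [hτdef, this]
  -- integrability of the stopped value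
  have hYT_meas : AEStronglyMeasurable (fun ω => Y (T ω).toNat ω) P :=
    aestronglyMeasurable_of_tendsto_ae atTop hsv_meas h_lim
  have hYT_int : Integrable (fun ω => Y (T ω).toNat ω) P := by
    refine hg_int.mono' hYT_meas ?_
    filter_upwards [hgrowth_all] with ω hωg
    exact hωg (T ω).toNat
  refine ⟨hTfin, hYT_int, ?_⟩
  have htend := tendsto_integral_of_dominated_convergence g hsv_meas hg_int h_bound h_lim
  have hconst : (fun n => ∫ ω, stoppedValue Y (fun ω => (τ n ω : WithTop ℕ)) ω ∂P) = fun _ => ∫ ω, Y 0 ω ∂P :=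
    funext hsv_int
  rw [hconst] at htend
  exact tendsto_nhds_unique htend tendsto_const_nhds
end

section
/- Extended optional stopping theorem with polynomial growth, supermartingale version (upper-bound half of Theorem D.3): Let (Ω, F, P) be a probability space with filtration (F_n)_{n∈ℕ}, let (U_n)_{n∈ℕ} be a supermartingale with respect to (F_n) (adapted, integrable, and E[U_{n+1} | F_n] ≤ U_n a.s. for all n), and let T : Ω → ℕ ∪ {∞} be a stopping time with respect to (F_n). Suppose there exist ℓ ∈ ℕ with ℓ ≥ 1 and a constant C ≥ 0 such that E[T^ℓ] < ∞ and, for every n ∈ ℕ, |U_n| ≤ C·(n+1)^ℓ holds P-almost surely. Then T < ∞ almost surely, the stopped value U_T is integrable, and E[U_T] ≤ E[U_0]. -/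
open MeasureTheory Filter
open scoped ENNReal Topology

private lemma nat_pow_aux {ℓ : ℕ} (hℓ : 1 ≤ ℓ) (m : ℕ) :
    (m + 1) ^ ℓ ≤ 2 ^ ℓ * (m ^ ℓ + 1) := by
  calc (m + 1) ^ ℓ ≤ (2 * max m 1) ^ ℓ := by
        apply Nat.pow_le_pow_left
        rcases le_total m 1 with h | h
        · rw [max_eq_right h]; omega
        · rw [max_eq_left h]; omega
  _ = 2 ^ ℓ * (max m 1) ^ ℓ := mul_pow _ _ _
  _ ≤ 2 ^ ℓ * (m ^ ℓ + 1) := by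
        apply Nat.mul_le_mul_left
        rcases Nat.eq_zero_or_pos m with h | h
        · subst h; simp
        · rw [max_eq_left h]; omega

/-- Extended optional stopping theorem with polynomial growth, supermartingale
version (upper-bound half of Theorem D.3): if `(U_n)` is a supermartingale,
`T` is a stopping time with `E[T^ℓ] < ∞` for some `ℓ ≥ 1`, and
`|U_n| ≤ C·(n+1)^ℓ` a.s. for all `n`, then `T < ∞` a.s., the stopped value
`U_T` is integrable, and `E[U_T] ≤ E[U_0]`. -/
theorem extended_optional_stopping_supermartingale
    {Ω : Type*} {mΩ : MeasurableSpace Ω} (P : Measure Ω) [IsProbabilityMeasure P]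
    (ℱ : Filtration ℕ mΩ) (U : ℕ → Ω → ℝ)
    (hU : Supermartingale U ℱ P)
    (T : Ω → ℕ∞) (hT : ∀ n : ℕ, MeasurableSet[ℱ n] {ω | T ω ≤ (n : ℕ∞)})
    (ℓ : ℕ) (hℓ : 1 ≤ ℓ) (C : ℝ) (hC : 0 ≤ C)
    (hTmom : ∫⁻ ω, (T ω : ℝ≥0∞) ^ ℓ ∂P < ⊤)
    (hgrowth : ∀ n : ℕ, ∀ᵐ ω ∂P, |U n ω| ≤ C * (n + 1) ^ ℓ) :
    (∀ᵐ ω ∂P, T ω < ⊤) ∧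
    Integrable (fun ω => U (T ω).toNat ω) P ∧
    ∫ ω, U (T ω).toNat ω ∂P ≤ ∫ ω, U 0 ω ∂P := by
  classical
  have hTle : ∀ n : ℕ, MeasurableSet {ω | T ω ≤ (n : ℕ∞)} := fun n => ℱ.le n _ (hT n)
  -- the set where T = ∞ is measurable
  have hAeq : {ω | T ω = ⊤} = ⋂ n : ℕ, {ω | T ω ≤ (n : ℕ∞)}ᶜ := by
    ext ω
    simp only [Set.mem_iInter, Set.mem_compl_iff, Set.mem_setOf_eq]
    constructor
    · intro h n hn
      rw [h] at hn
      exact (ENat.coe_lt_top n).not_ge hn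
    · intro h
      by_contra hne
      obtain ⟨m, hm⟩ := WithTop.ne_top_iff_exists.1 hne
      exact h m (le_of_eq hm.symm)
  have hAmeas : MeasurableSet {ω | T ω = ⊤} := by
    rw [hAeq]; exact MeasurableSet.iInter fun n => (hTle n).compl
  -- T is measurable
  have hTmeas : Measurable T := by
    apply measurable_to_countable'
    intro x
    induction x using ENat.recTopCoe with
    | top => exact hAmeas
    | coe n =>
      cases n with
      | zero =>
        have : T ⁻¹' {((0 : ℕ) : ℕ∞)} = {ω | T ω ≤ ((0 : ℕ) : ℕ∞)} := by
          ext ω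
          simp only [Set.mem_preimage, Set.mem_singleton_iff, Set.mem_setOf_eq,
            Nat.cast_zero, nonpos_iff_eq_zero]
        rw [this]; exact hTle 0
      | succ k =>
        have : T ⁻¹' {((k + 1 : ℕ) : ℕ∞)} =
            {ω | T ω ≤ ((k + 1 : ℕ) : ℕ∞)} \ {ω | T ω ≤ ((k : ℕ) : ℕ∞)} := by
          ext ω
          simp only [Set.mem_preimage, Set.mem_singleton_iff, Set.mem_diff, Set.mem_setOf_eq]
          constructor
          · intro h
            refine ⟨le_of_eq h, fun h2 => ?_⟩
            rw [h] at h2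
            exact Nat.not_succ_le_self k (by exact_mod_cast h2)
          · rintro ⟨h1, h2⟩
            have := lt_of_not_ge h2
            have hk : ((k : ℕ) : ℕ∞) + 1 ≤ T ω := Order.add_one_le_of_lt this
            refine le_antisymm h1 ?_
            simpa [Nat.cast_add, Nat.cast_one] using hk
        rw [this]; exact (hTle (k + 1)).diff (hTle k)
  -- T < ∞ a.s.
  have hPA : P {ω | T ω = ⊤} = 0 := by
    by_contra h
    have h1 : (⊤ : ℝ≥0∞) ≤ ∫⁻ ω, (T ω : ℝ≥0∞) ^ ℓ ∂P := by
      calc (⊤ : ℝ≥0∞) = ⊤ * P {ω | T ω = ⊤} := (ENNReal.top_mul h).symm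
      _ = ∫⁻ _ω in {ω | T ω = ⊤}, ⊤ ∂P := (setLIntegral_const _ _).symm
      _ = ∫⁻ ω in {ω | T ω = ⊤}, (T ω : ℝ≥0∞) ^ ℓ ∂P := by
          refine setLIntegral_congr_fun hAmeas (fun ω hω => ?_)
          rw [Set.mem_setOf_eq] at hω
          rw [hω, ENat.toENNReal_top, ENNReal.top_pow (by omega)]
      _ ≤ ∫⁻ ω, (T ω : ℝ≥0∞) ^ ℓ ∂P := setLIntegral_le_lintegral _ _
    exact absurd (lt_of_le_of_lt h1 hTmom) (lt_irrefl _)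
  have hTfin : ∀ᵐ ω ∂P, T ω < ⊤ := by
    rw [ae_iff]
    convert hPA using 2
    ext ω
    simp [lt_top_iff_ne_top]
  -- the truncated stopping times
  set T' : Ω → ℕ := fun ω => (T ω).toNat with hT'
  set τ : ℕ → Ω → ℕ := fun n ω => (min (T ω) n).toNat with hτ
  have hτbdd : ∀ n ω, τ n ω ≤ n := by
    intro n ω
    have := ENat.toNat_le_toNat (min_le_right (T ω) (n : ℕ∞)) (ENat.coe_ne_top n)
    simpa using this
  have hτst : ∀ n, IsStoppingTime ℱ (fun ω => (τ n ω : ℕ∞)) := by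
    intro n i
    show MeasurableSet[ℱ i] {ω | ((τ n ω : ℕ∞)) ≤ ((i : ℕ) : ℕ∞)}
    simp only [Nat.cast_le]
    by_cases h : n ≤ i
    · have : {ω | τ n ω ≤ i} = Set.univ := by
        ext ω; simp only [Set.mem_setOf_eq, Set.mem_univ, iff_true]
        exact (hτbdd n ω).trans h
      rw [this]; exact MeasurableSet.univ
    · push_neg at h
      have : {ω | τ n ω ≤ i} = {ω | T ω ≤ (i : ℕ∞)} := by
        ext ω
        simp only [Set.mem_setOf_eq, hτ]
        have hmin : min (T ω) (n : ℕ∞) ≠ ⊤ :=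
          ne_top_of_le_ne_top (ENat.coe_ne_top n) (min_le_right _ _)
        have hcoe : ((min (T ω) (n : ℕ∞)).toNat : ℕ∞) = min (T ω) (n : ℕ∞) :=
          ENat.coe_toNat hmin
        constructor
        · intro hle
          have h1 : min (T ω) (n : ℕ∞) ≤ (i : ℕ∞) := by
            rw [← hcoe]; exact_mod_cast hle
          rcases min_le_iff.1 h1 with h2 | h2
          · exact h2
          · exact absurd (by exact_mod_cast h2 : n ≤ i) (not_le.2 h)
        · intro hle
          have h1 : min (T ω) (n : ℕ∞) ≤ (i : ℕ∞) := le_trans (min_le_left _ _) hle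
          rw [← hcoe] at h1
          exact_mod_cast h1
      rw [this]; exact ℱ.mono i.le_refl _ (hT i)
  -- integrability of the truncated stopped values
  have hint : ∀ n, Integrable (stoppedValue U (fun ω => (τ n ω : ℕ∞))) P := fun n =>
    integrable_stoppedValue ℕ (hτst n) hU.integrable (N := n) (fun ω => WithTop.coe_le_coe.2 (hτbdd n ω))
  -- optional stopping for bounded stopping times
  have hle : ∀ n, ∫ ω, stoppedValue U (fun ω => (τ n ω : ℕ∞)) ω ∂P ≤ ∫ ω, U 0 ω ∂P := by
    intro n
    have h0 : IsStoppingTime ℱ (fun _ : Ω => 0) := isStoppingTime_const ℱ 0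
    have := hU.neg.expected_stoppedValue_mono h0 (hτst n)
      (fun ω => WithTop.coe_le_coe.2 (Nat.zero_le _)) (N := n) (fun ω => WithTop.coe_le_coe.2 (hτbdd n ω))
    have hsv : stoppedValue (-U) (fun ω => (τ n ω : ℕ∞)) = -(stoppedValue U (fun ω => (τ n ω : ℕ∞))) := rfl
    have hsv0 : stoppedValue (-U) (fun _ : Ω => 0) = -(U 0) := rfl
    rw [hsv, hsv0] at this
    simp only [Pi.neg_apply] at this
    rw [integral_neg, integral_neg] at this
    exact le_of_neg_le_neg this
  -- dominating function
  set g : Ω → ℝ := fun ω => C * ((T' ω + 1 : ℕ) : ℝ) ^ ℓ with hg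
  have hT'meas : Measurable T' := (measurable_of_countable ENat.toNat).comp hTmeas
  have hg_meas : Measurable g :=
    (measurable_of_countable (fun m : ℕ => C * ((m + 1 : ℕ) : ℝ) ^ ℓ)).comp hT'meas
  have hg_nonneg : ∀ ω, 0 ≤ g ω := fun ω => mul_nonneg hC (by positivity)
  -- integrability of g
  have hg_int : Integrable g P := by
    refine ⟨hg_meas.aestronglyMeasurable, ?_⟩
    rw [hasFiniteIntegral_iff_ofReal (ae_of_all _ hg_nonneg)]
    have key : ∀ ω, ENNReal.ofReal (g ω) ≤
        ENNReal.ofReal C * (2 ^ ℓ * ((T ω : ℝ≥0∞) ^ ℓ + 1)) := by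
      intro ω
      rw [hg, ENNReal.ofReal_mul hC]
      refine mul_le_mul_right ?_ _
      rw [ENNReal.ofReal_pow (by positivity), ENNReal.ofReal_natCast]
      calc ((T' ω + 1 : ℕ) : ℝ≥0∞) ^ ℓ = (((T' ω + 1) ^ ℓ : ℕ) : ℝ≥0∞) := by push_cast; ring
      _ ≤ ((2 ^ ℓ * (T' ω ^ ℓ + 1) : ℕ) : ℝ≥0∞) := by exact_mod_cast nat_pow_aux hℓ (T' ω)
      _ = 2 ^ ℓ * (((T' ω : ℕ) : ℝ≥0∞) ^ ℓ + 1) := by push_cast; ring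
      _ ≤ 2 ^ ℓ * ((T ω : ℝ≥0∞) ^ ℓ + 1) := by
          refine mul_le_mul_right (add_le_add_left (pow_le_pow_left' ?_ ℓ) 1) _
          rcases eq_or_ne (T ω) ⊤ with hω | hω
          · simp [hω]
          · obtain ⟨m, hm⟩ := WithTop.ne_top_iff_exists.1 hω
            simp only [hT', ← hm]
            exact_mod_cast le_rfl
    calc ∫⁻ ω, ENNReal.ofReal (g ω) ∂P
        ≤ ∫⁻ ω, ENNReal.ofReal C * (2 ^ ℓ * ((T ω : ℝ≥0∞) ^ ℓ + 1)) ∂P :=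
          lintegral_mono key
      _ = ENNReal.ofReal C * (2 ^ ℓ * (∫⁻ ω, ((T ω : ℝ≥0∞) ^ ℓ + 1) ∂P)) := by
          rw [lintegral_const_mul' _ _ ENNReal.ofReal_ne_top,
            lintegral_const_mul' _ _ (by simp : (2 : ℝ≥0∞) ^ ℓ ≠ ⊤)]
      _ < ⊤ := by
          have hmeas : Measurable fun ω => (T ω : ℝ≥0∞) ^ ℓ :=
            (measurable_of_countable (fun m : ℕ∞ => (m : ℝ≥0∞) ^ ℓ)).comp hTmeas
          rw [lintegral_add_left hmeas, lintegral_one, measure_univ]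
          exact ENNReal.mul_lt_top ENNReal.ofReal_lt_top
            (ENNReal.mul_lt_top (ENNReal.pow_lt_top ENNReal.ofNat_lt_top)
              (ENNReal.add_lt_top.2 ⟨hTmom, ENNReal.one_lt_top⟩))
  -- the a.e. good event
  have hEvent : ∀ᵐ ω ∂P, T ω < ⊤ ∧ ∀ k : ℕ, |U k ω| ≤ C * ((k : ℝ) + 1) ^ ℓ :=
    hTfin.and ((ae_all_iff).2 hgrowth)
  -- domination
  have hcast : ∀ (a b : ℕ), a ≤ b → C * ((a + 1 : ℕ) : ℝ) ^ ℓ ≤ C * ((b + 1 : ℕ) : ℝ) ^ ℓ := by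
    intro a b hab
    have : ((a + 1 : ℕ) : ℝ) ≤ ((b + 1 : ℕ) : ℝ) := by exact_mod_cast Nat.succ_le_succ hab
    exact mul_le_mul_of_nonneg_left (pow_le_pow_left₀ (by positivity) this ℓ) hC
  have h_bound : ∀ n, ∀ᵐ ω ∂P, ‖stoppedValue U (fun ω => (τ n ω : ℕ∞)) ω‖ ≤ g ω := by
    intro n
    filter_upwards [hEvent] with ω ⟨hfin, hgr⟩
    have h1 : τ n ω ≤ T' ω := ENat.toNat_le_toNat (min_le_left _ _) hfin.ne
    calc ‖stoppedValue U (fun ω => (τ n ω : ℕ∞)) ω‖ = |U (τ n ω) ω| := rfl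
    _ ≤ C * ((τ n ω : ℝ) + 1) ^ ℓ := hgr (τ n ω)
    _ = C * ((τ n ω + 1 : ℕ) : ℝ) ^ ℓ := by push_cast; ring
    _ ≤ C * ((T' ω + 1 : ℕ) : ℝ) ^ ℓ := hcast _ _ h1
    _ = g ω := rfl
  -- a.e. convergence
  have h_tendsto : ∀ᵐ ω ∂P,
      Tendsto (fun n => stoppedValue U (fun ω => (τ n ω : ℕ∞)) ω) atTop (𝓝 (U (T ω).toNat ω)) := by
    filter_upwards [hTfin] with ω hfin
    apply tendsto_atTop_of_eventually_const (i₀ := T' ω)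
    intro n hn
    have hTn : T ω ≤ (n : ℕ∞) := by
      rw [← ENat.coe_toNat hfin.ne]
      exact_mod_cast hn
    simp only [stoppedValue, hτ, min_eq_left hTn]; rfl
  -- measurability and integrability of the stopped value
  have hUT_meas : AEStronglyMeasurable (fun ω => U (T ω).toNat ω) P :=
    aestronglyMeasurable_of_tendsto_ae atTop (fun n => (hint n).aestronglyMeasurable) h_tendsto
  have hUT_bound : ∀ᵐ ω ∂P, ‖U (T ω).toNat ω‖ ≤ g ω := by
    filter_upwards [hEvent] with ω ⟨hfin, hgr⟩
    calc ‖U (T' ω) ω‖ = |U (T' ω) ω| := rfl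
    _ ≤ C * ((T' ω : ℝ) + 1) ^ ℓ := hgr (T' ω)
    _ = g ω := by simp only [hg, Nat.cast_add, Nat.cast_one]
  have hUT_int : Integrable (fun ω => U (T ω).toNat ω) P :=
    Integrable.mono' hg_int hUT_meas hUT_bound
  refine ⟨hTfin, hUT_int, ?_⟩
  have h_int_tendsto : Tendsto (fun n => ∫ ω, stoppedValue U (fun ω => (τ n ω : ℕ∞)) ω ∂P) atTop
      (𝓝 (∫ ω, U (T ω).toNat ω ∂P)) :=
    tendsto_integral_of_dominated_convergence g (fun n => (hint n).aestronglyMeasurable)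
      hg_int h_bound h_tendsto
  exact le_of_tendsto h_int_tendsto (Eventually.of_forall hle)
end

section
/- Extended optional stopping theorem with polynomial growth, submartingale version (lower-bound half of Theorem D.3): Let (Ω, F, P) be a probability space with filtration (F_n)_{n∈ℕ}, let (L_n)_{n∈ℕ} be a submartingale with respect to (F_n) (adapted, integrable, and E[L_{n+1} | F_n] ≥ L_n a.s. for all n), and let T : Ω → ℕ ∪ {∞} be a stopping time with respect to (F_n). Suppose there exist ℓ ∈ ℕ with ℓ ≥ 1 and a constant C ≥ 0 such that E[T^ℓ] < ∞ and, for every n ∈ ℕ, |L_n| ≤ C·(n+1)^ℓ holds P-almost surely. Then T < ∞ almost surely, the stopped value L_T is integrable, and E[L_T] ≥ E[L_0]. -/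
open MeasureTheory Filter
open scoped ENNReal Topology

private lemma enat_toNat_le_iff {x : ℕ∞} (hx : x ≠ ⊤) (m : ℕ) :
    x.toNat ≤ m ↔ x ≤ (m : ℕ∞) := by
  lift x to ℕ using hx
  simp

private lemma ennreal_add_one_pow_le (t : ℝ≥0∞) (ℓ : ℕ) :
    (t + 1) ^ ℓ ≤ 2 ^ ℓ * (t ^ ℓ + 1) := by
  have h1 : t + 1 ≤ 2 * max t 1 := by
    rcases le_total t 1 with h | h
    · calc t + 1 ≤ 1 + 1 := by gcongr
        _ = 2 * 1 := by ring
        _ ≤ 2 * max t 1 := by gcongr; exact le_max_right _ _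
    · calc t + 1 ≤ t + t := by gcongr
        _ = 2 * t := by ring
        _ ≤ 2 * max t 1 := by gcongr; exact le_max_left _ _
  calc (t + 1) ^ ℓ ≤ (2 * max t 1) ^ ℓ := by gcongr
    _ = 2 ^ ℓ * (max t 1) ^ ℓ := mul_pow _ _ _
    _ ≤ 2 ^ ℓ * (t ^ ℓ + 1) := by
        gcongr
        rcases le_total t 1 with h | h
        · rw [max_eq_right h]; simpa using le_add_self
        · rw [max_eq_left h]; exact le_self_add

/-- Extended optional stopping theorem with polynomial growth, submartingale
version (lower-bound half of Theorem D.3): if `(L_n)` is a submartingale,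
`T` is a stopping time with `E[T^ℓ] < ∞` for some `ℓ ≥ 1`, and
`|L_n| ≤ C·(n+1)^ℓ` a.s. for all `n`, then `T < ∞` a.s., the stopped value
`L_T` is integrable, and `E[L_T] ≥ E[L_0]`. -/
theorem extended_optional_stopping_submartingale
    {Ω : Type*} {mΩ : MeasurableSpace Ω} (P : Measure Ω) [IsProbabilityMeasure P]
    (ℱ : Filtration ℕ mΩ) (L : ℕ → Ω → ℝ)
    (hL : Submartingale L ℱ P)
    (T : Ω → ℕ∞) (hT : ∀ n : ℕ, MeasurableSet[ℱ n] {ω | T ω ≤ (n : ℕ∞)})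
    (ℓ : ℕ) (hℓ : 1 ≤ ℓ) (C : ℝ) (hC : 0 ≤ C)
    (hTmom : ∫⁻ ω, (T ω : ℝ≥0∞) ^ ℓ ∂P < ⊤)
    (hgrowth : ∀ n : ℕ, ∀ᵐ ω ∂P, |L n ω| ≤ C * (n + 1) ^ ℓ) :
    (∀ᵐ ω ∂P, T ω < ⊤) ∧
    Integrable (fun ω => L (T ω).toNat ω) P ∧
    ∫ ω, L 0 ω ∂P ≤ ∫ ω, L (T ω).toNat ω ∂P := by
  classical
  have hTm : ∀ n : ℕ, MeasurableSet {ω | T ω ≤ (n : ℕ∞)} := fun n => ℱ.le n _ (hT n)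
  -- measurability of T
  have hTmeas : Measurable T := by
    apply measurable_to_countable'
    intro y
    induction y using ENat.recTopCoe with
    | top =>
      have : T ⁻¹' {⊤} = (⋃ n : ℕ, {ω | T ω ≤ (n : ℕ∞)})ᶜ := by
        ext ω
        simp only [Set.mem_preimage, Set.mem_singleton_iff, Set.mem_compl_iff, Set.mem_iUnion,
          Set.mem_setOf_eq, not_exists]
        constructor
        · intro h n hn
          rw [h] at hn
          exact (ENat.coe_lt_top n).not_ge hn
        · intro h
          by_contra hne
          lift T ω to ℕ using hne with k hk
          exact h k le_rfl
      rw [this]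
      exact (MeasurableSet.iUnion fun n => hTm n).compl
    | coe k =>
      have : T ⁻¹' {(k : ℕ∞)} =
          {ω | T ω ≤ (k : ℕ∞)} \ ⋃ (j : ℕ) (_ : j < k), {ω | T ω ≤ (j : ℕ∞)} := by
        ext ω
        simp only [Set.mem_preimage, Set.mem_singleton_iff, Set.mem_diff, Set.mem_iUnion,
          Set.mem_setOf_eq, not_exists]
        constructor
        · intro h
          refine ⟨le_of_eq h, fun j hj hle => ?_⟩
          rw [h] at hle
          exact absurd (by exact_mod_cast hle : k ≤ j) (not_le.2 hj)
        · rintro ⟨h1, h2⟩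
          have hne : T ω ≠ ⊤ := ne_top_of_le_ne_top (ENat.coe_ne_top k) h1
          lift T ω to ℕ using hne with m hm
          have h1' : m ≤ k := by exact_mod_cast h1
          have h2' : ∀ j < k, ¬ m ≤ j := fun j hj hh => h2 j hj (by exact_mod_cast hh)
          have : m = k := by
            by_contra hmk
            exact h2' m (lt_of_le_of_ne h1' hmk) le_rfl
          exact_mod_cast congrArg (Nat.cast : ℕ → ℕ∞) this
      rw [this]
      exact (hTm k).diff (MeasurableSet.iUnion fun j => MeasurableSet.iUnion fun _ => hTm j)
  -- T < ⊤ a.s.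
  have hTpowmeas : Measurable fun ω => (T ω : ℝ≥0∞) ^ ℓ :=
    ((measurable_of_countable (fun x : ℕ∞ => (x : ℝ≥0∞))).comp hTmeas).pow_const ℓ
  have hfin : ∀ᵐ ω ∂P, T ω < ⊤ := by
    filter_upwards [ae_lt_top hTpowmeas hTmom.ne] with ω hω
    by_contra h
    push_neg at h
    rw [top_le_iff] at h
    rw [h] at hω
    simp only [ENat.toENNReal_top] at hω
    rw [ENNReal.top_pow (by omega : ℓ ≠ 0)] at hω
    exact lt_irrefl _ hω
  -- the truncated stopping times
  set S : ℕ → Ω → ℕ := fun n ω => (min (T ω) (n : ℕ∞)).toNat with hSdef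
  have hSne : ∀ (n : ℕ) (ω : Ω), min (T ω) ((n : ℕ∞)) ≠ ⊤ := fun n ω =>
    ne_top_of_le_ne_top (ENat.coe_ne_top n) (min_le_right _ _)
  have hS_bdd : ∀ n ω, S n ω ≤ n := by
    intro n ω
    rw [hSdef]
    exact (enat_toNat_le_iff (hSne n ω) n).2 (min_le_right _ _)
  have hS_st : ∀ n, IsStoppingTime ℱ (fun ω => ((S n ω : ℕ) : ℕ∞)) := by
    intro n m
    convert_to MeasurableSet[ℱ m] {ω | S n ω ≤ m} using 2
    · ext ω; exact WithTop.coe_le_coe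
    by_cases h : n ≤ m
    · have : {ω | S n ω ≤ m} = Set.univ :=
        Set.eq_univ_of_forall fun ω => (hS_bdd n ω).trans h
      rw [this]
      exact MeasurableSet.univ
    · push_neg at h
      have : {ω | S n ω ≤ m} = {ω | T ω ≤ (m : ℕ∞)} := by
        ext ω
        simp only [Set.mem_setOf_eq, hSdef]
        rw [enat_toNat_le_iff (hSne n ω) m, min_le_iff]
        constructor
        · rintro (hh | hh)
          · exact hh
          · exact absurd (by exact_mod_cast hh) (not_le.2 h)
        · exact Or.inl
      rw [this]
      exact hT m
  have hS_int : ∀ n, Integrable (stoppedValue L (fun ω => ((S n ω : ℕ) : ℕ∞))) P := fun n =>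
    integrable_stoppedValue ℕ (hS_st n) hL.integrable (N := n) (fun ω => WithTop.coe_le_coe.2 (hS_bdd n ω))
  -- optional stopping at bounded times
  have hmono : ∀ n, ∫ ω, L 0 ω ∂P ≤ ∫ ω, stoppedValue L (fun ω => ((S n ω : ℕ) : ℕ∞)) ω ∂P := by
    intro n
    have := hL.expected_stoppedValue_mono (isStoppingTime_const ℱ 0) (hS_st n)
      (fun ω => WithTop.coe_le_coe.2 (Nat.zero_le _)) (N := n) (fun ω => WithTop.coe_le_coe.2 (hS_bdd n ω))
    simpa [stoppedValue] using this

  -- a.s. convergence of stopped values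
  have hconv : ∀ᵐ ω ∂P,
      Tendsto (fun n => stoppedValue L (fun ω => ((S n ω : ℕ) : ℕ∞)) ω) atTop (𝓝 (L (T ω).toNat ω)) := by
    filter_upwards [hfin] with ω hω
    apply tendsto_atTop_of_eventually_const (i₀ := (T ω).toNat)
    intro n hn
    have hTle : T ω ≤ (n : ℕ∞) := by
      rw [← ENat.coe_toNat hω.ne]
      exact_mod_cast hn
    simp [stoppedValue, hSdef, min_eq_left hTle]
  -- the dominating function
  set bound : Ω → ℝ := fun ω => C * (((T ω).toNat : ℝ) + 1) ^ ℓ with hbdef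
  have hbound_meas : Measurable bound :=
    (measurable_of_countable (fun k : ℕ => C * ((k : ℝ) + 1) ^ ℓ)).comp
      ((measurable_of_countable ENat.toNat).comp hTmeas)
  have hbound_nonneg : ∀ ω, 0 ≤ bound ω := fun ω => by positivity
  have hbound_int : Integrable bound P := by
    refine ⟨hbound_meas.aestronglyMeasurable, ?_⟩
    rw [hasFiniteIntegral_iff_norm]
    have key : ∀ᵐ ω ∂P, ENNReal.ofReal ‖bound ω‖ ≤
        ENNReal.ofReal C * 2 ^ ℓ * ((T ω : ℝ≥0∞) ^ ℓ + 1) := by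
      filter_upwards [hfin] with ω hω
      set t : ℕ := (T ω).toNat with htdef
      have hcast : ((t : ℕ∞) : ℝ≥0∞) = (T ω : ℝ≥0∞) := by
        rw [htdef, ENat.coe_toNat hω.ne]
      have hTt : (T ω : ℝ≥0∞) = (t : ℝ≥0∞) := by
        rw [← hcast, ENat.toENNReal_coe]
      rw [Real.norm_of_nonneg (hbound_nonneg ω), hbdef]
      simp only []
      rw [ENNReal.ofReal_mul hC, ENNReal.ofReal_pow (by positivity)]
      have hofr : ENNReal.ofReal (((t : ℕ) : ℝ) + 1) = (t : ℝ≥0∞) + 1 := by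
        rw [ENNReal.ofReal_add (by positivity) zero_le_one, ENNReal.ofReal_natCast,
          ENNReal.ofReal_one]
      rw [hofr, hTt]
      calc ENNReal.ofReal C * ((t : ℝ≥0∞) + 1) ^ ℓ
          ≤ ENNReal.ofReal C * (2 ^ ℓ * ((t : ℝ≥0∞) ^ ℓ + 1)) := by
            gcongr
            exact ennreal_add_one_pow_le _ ℓ
        _ = ENNReal.ofReal C * 2 ^ ℓ * ((t : ℝ≥0∞) ^ ℓ + 1) := by ring
    calc ∫⁻ ω, ENNReal.ofReal ‖bound ω‖ ∂P
        ≤ ∫⁻ ω, ENNReal.ofReal C * 2 ^ ℓ * ((T ω : ℝ≥0∞) ^ ℓ + 1) ∂P :=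
          lintegral_mono_ae key
      _ = ENNReal.ofReal C * 2 ^ ℓ * ∫⁻ ω, ((T ω : ℝ≥0∞) ^ ℓ + 1) ∂P :=
          lintegral_const_mul' _ _
            (ENNReal.mul_ne_top ENNReal.ofReal_ne_top (ENNReal.pow_ne_top ENNReal.ofNat_ne_top))
      _ = ENNReal.ofReal C * 2 ^ ℓ * ((∫⁻ ω, (T ω : ℝ≥0∞) ^ ℓ ∂P) + 1) := by
          rw [lintegral_add_right _ measurable_const, lintegral_one, measure_univ]
      _ < ⊤ :=
          ENNReal.mul_lt_top
            (ENNReal.mul_lt_top ENNReal.ofReal_lt_top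
              (ENNReal.pow_lt_top (by norm_num)))
            (ENNReal.add_lt_top.2 ⟨hTmom, ENNReal.one_lt_top⟩)
  -- the a.s. bound on stopped values
  have hall : ∀ᵐ ω ∂P, ∀ k : ℕ, |L k ω| ≤ C * (k + 1) ^ ℓ := ae_all_iff.2 hgrowth
  have hbd : ∀ n, ∀ᵐ ω ∂P, ‖stoppedValue L (fun ω => ((S n ω : ℕ) : ℕ∞)) ω‖ ≤ bound ω := by
    intro n
    filter_upwards [hall, hfin] with ω hω hωfin
    have hSle : S n ω ≤ (T ω).toNat := by
      rw [hSdef]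
      exact ENat.toNat_le_toNat (min_le_left _ _) hωfin.ne
    calc ‖stoppedValue L (fun ω => ((S n ω : ℕ) : ℕ∞)) ω‖ = |L (S n ω) ω| := Real.norm_eq_abs _
      _ ≤ C * ((S n ω : ℝ) + 1) ^ ℓ := hω (S n ω)
      _ ≤ C * (((T ω).toNat : ℝ) + 1) ^ ℓ := by
          gcongr
  -- measurability and integrability of the limit
  have hSmeas : ∀ n, AEStronglyMeasurable (stoppedValue L (fun ω => ((S n ω : ℕ) : ℕ∞))) P := fun n =>
    (hS_int n).aestronglyMeasurable
  have hlim_meas : AEStronglyMeasurable (fun ω => L (T ω).toNat ω) P :=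
    aestronglyMeasurable_of_tendsto_ae atTop hSmeas hconv
  have hlim_bd : ∀ᵐ ω ∂P, ‖L (T ω).toNat ω‖ ≤ bound ω := by
    have := ae_all_iff.2 hbd
    filter_upwards [this, hconv] with ω hω hconvω
    exact le_of_tendsto ((continuous_norm.tendsto _).comp hconvω) (Eventually.of_forall hω)
  have hint : Integrable (fun ω => L (T ω).toNat ω) P :=
    Integrable.mono' hbound_int hlim_meas hlim_bd
  -- conclude
  refine ⟨hfin, hint, ?_⟩
  have htend : Tendsto (fun n => ∫ ω, stoppedValue L (fun ω => ((S n ω : ℕ) : ℕ∞)) ω ∂P) atTop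
      (𝓝 (∫ ω, L (T ω).toNat ω ∂P)) :=
    tendsto_integral_of_dominated_convergence bound hSmeas hbound_int hbd hconv
  exact ge_of_tendsto htend (Eventually.of_forall hmono)
end

section
/- Ranking-supermartingale bound on expected stopping time (scalar first-moment instance of the termination theorem of Appendix G): Let (Ω, F, P) be a probability space with filtration (F_n)_{n∈ℕ}, let T : Ω → ℕ ∪ {∞} be a stopping time with respect to (F_n), and let (ψ_n)_{n∈ℕ} be an adapted sequence of nonnegative integrable real-valued random variables such that for every n ∈ ℕ, P-almost surely, 1_{{T > n}} + E[ψ_{n+1} | F_n] ≤ ψ_n. Then E[T] ≤ E[ψ_0], where E[T] denotes the Lebesgue integral of T with values in [0,∞]; in particular E[T] is finite. -/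
open MeasureTheory Filter
open scoped ENNReal

lemma enat_cast_eq_tsum (a : ℕ∞) :
    (a : ℝ≥0∞) = ∑' n : ℕ, (if (n : ℕ∞) < a then (1 : ℝ≥0∞) else 0) := by
  cases a with
  | top =>
    simp only [ENat.coe_lt_top, if_true]
    simp [ENNReal.tsum_const_eq_top_of_ne_zero]
  | coe m =>
    rw [tsum_eq_sum (s := Finset.range m) (by
      intro n hn
      simp only [Finset.mem_range, not_lt] at hn
      simp [Nat.cast_le.mpr hn, not_lt.mpr])]
    have : ∀ n ∈ Finset.range m, (if (n : ℕ∞) < (m : ℕ∞) then (1:ℝ≥0∞) else 0) = 1 := by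
      intro n hn
      simp [Nat.cast_lt.mpr (Finset.mem_range.mp hn)]
    rw [Finset.sum_congr rfl this]
    simp

/-- Ranking-supermartingale bound on expected stopping time (scalar
first-moment instance of the termination theorem of Appendix G): if `(ψ_n)` is
an adapted sequence of nonnegative integrable random variables such that, for
every `n`, `1_{T > n} + E[ψ_{n+1} | F_n] ≤ ψ_n` holds almost surely, then the
expected stopping time satisfies `E[T] ≤ E[ψ_0]`; in particular it is finite. -/
theorem ranking_supermartingale_expected_stopping_time
    {Ω : Type*} {mΩ : MeasurableSpace Ω} (P : Measure Ω) [IsProbabilityMeasure P]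
    (ℱ : Filtration ℕ mΩ)
    (T : Ω → ℕ∞) (hT : ∀ n : ℕ, MeasurableSet[ℱ n] {ω | T ω ≤ (n : ℕ∞)})
    (ψ : ℕ → Ω → ℝ)
    (hadapt : ∀ n, StronglyMeasurable[ℱ n] (ψ n))
    (hnonneg : ∀ n ω, 0 ≤ ψ n ω)
    (hint : ∀ n, Integrable (ψ n) P)
    (hdec : ∀ n : ℕ,
      (fun ω => {ω | (n : ℕ∞) < T ω}.indicator (fun _ => (1 : ℝ)) ω
          + (P[ψ (n + 1) | ℱ n]) ω) ≤ᵐ[P] ψ n) :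
    ∫⁻ ω, (T ω : ℝ≥0∞) ∂P ≤ ENNReal.ofReal (∫ ω, ψ 0 ω ∂P) := by
  set s : ℕ → Set Ω := fun n => {ω | (n : ℕ∞) < T ω} with hs
  have hmeas : ∀ n, MeasurableSet (s n) := by
    intro n
    have : s n = {ω | T ω ≤ (n : ℕ∞)}ᶜ := by
      ext ω; simp [s, not_le]
    rw [this]
    exact (ℱ.le n _ (hT n)).compl
  -- step inequality on integrals
  have hstep : ∀ n, (P (s n)).toReal + ∫ ω, ψ (n+1) ω ∂P ≤ ∫ ω, ψ n ω ∂P := by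
    intro n
    have hind : Integrable ((s n).indicator (fun _ => (1 : ℝ))) P :=
      (integrable_const (1:ℝ)).indicator (hmeas n)
    have hLHS : Integrable (fun ω => (s n).indicator (fun _ => (1:ℝ)) ω
        + (P[ψ (n+1) | ℱ n]) ω) P := hind.add integrable_condExp
    have h := integral_mono_ae hLHS (hint n) (hdec n)
    rw [integral_add hind integrable_condExp, integral_condExp (ℱ.le n),
      integral_indicator_const _ (hmeas n)] at h
    simp at h; exact h
  have hsum : ∀ N : ℕ, ∑ n ∈ Finset.range N, (P (s n)).toReal ≤ ∫ ω, ψ 0 ω ∂P := by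
    intro N
    have : ∑ n ∈ Finset.range N, (P (s n)).toReal
        ≤ ∫ ω, ψ 0 ω ∂P - ∫ ω, ψ N ω ∂P := by
      induction N with
      | zero => simp
      | succ N ih =>
        rw [Finset.sum_range_succ]
        have := hstep N
        linarith
    have hN : 0 ≤ ∫ ω, ψ N ω ∂P := integral_nonneg (hnonneg N)
    linarith
  -- rewrite lintegral as tsum of measures
  have hrw : ∫⁻ ω, (T ω : ℝ≥0∞) ∂P = ∑' n : ℕ, P (s n) := by
    have : ∀ ω, (T ω : ℝ≥0∞) = ∑' n : ℕ, (s n).indicator (fun _ => (1:ℝ≥0∞)) ω := by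
      intro ω
      rw [enat_cast_eq_tsum (T ω)]
      congr 1
      ext n
      simp [Set.indicator, s]
    calc ∫⁻ ω, (T ω : ℝ≥0∞) ∂P
        = ∫⁻ ω, ∑' n : ℕ, (s n).indicator (fun _ => (1:ℝ≥0∞)) ω ∂P := by
          exact lintegral_congr this
      _ = ∑' n : ℕ, ∫⁻ ω, (s n).indicator (fun _ => (1:ℝ≥0∞)) ω ∂P :=
          lintegral_tsum (fun n => ((measurable_const).indicator (hmeas n)).aemeasurable)
      _ = ∑' n : ℕ, P (s n) := tsum_congr fun n => by
          exact lintegral_indicator_one (hmeas n)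
  rw [hrw]
  rw [ENNReal.tsum_eq_iSup_sum]
  refine iSup_le fun F => ?_
  obtain ⟨N, hN⟩ := F.exists_nat_subset_range
  calc ∑ n ∈ F, P (s n) ≤ ∑ n ∈ Finset.range N, P (s n) :=
        Finset.sum_le_sum_of_subset hN
    _ ≤ ENNReal.ofReal (∫ ω, ψ 0 ω ∂P) := by
        have heq : ∀ n, P (s n) = ENNReal.ofReal ((P (s n)).toReal) := by
          intro n
          rw [ENNReal.ofReal_toReal (measure_ne_top P _)]
        rw [Finset.sum_congr rfl (fun n _ => heq n), ← ENNReal.ofReal_sum_of_nonneg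
          (fun n _ => ENNReal.toReal_nonneg)]
        exact ENNReal.ofReal_le_ofReal (hsum N)
end
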